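/- arXiv:cs/0604033 — 2 statements merged into one kernel-verified Lean document; each statement's English description precedes it below -/
import Mathlib

section
/- For nonnegative integers j > k and nonnegative integer ν, the integral ∫₀^∞ (ln x) · x^ν e^(-x) L_j^ν(x) L_k^ν(x) dx equals (k+ν)!/(k!·(k-j)) (which is negative). -/
open MeasureTheory Real

/-- Associated Laguerre polynomial `L_n^ν(x) = ∑_{k=0}^n C(n+ν, n-k) (-x)^k / k!`. -/
noncomputable def assocLaguerre (n ν : ℕ) (x : ℝ) : ℝ :=
  ∑ k ∈ Finset.range (n + 1), ((n + ν).choose (n - k) : ℝ) * (-x) ^ k / (Nat.factorial k)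

section LagAux

open Set Filter Polynomial Finset



lemma vand (N M R : ℕ) (hNM : N ≤ M) :
    ∑ t ∈ Finset.range (N+1), (-1:ℝ)^t * (N.choose t : ℝ) * ((M-t).choose R : ℝ)
      = if N ≤ R then ((M-N).choose (R-N) : ℝ) else 0 := by
  have key : (∑ t ∈ Finset.range (N+1),
      C ((-1:ℝ)^t * (N.choose t : ℝ)) * (X+1)^(M-t))
      = X^N * (X+1)^(M-N) := by
    have h := add_pow (-1 : Polynomial ℝ) (X+1) N
    have hX : (-1 : Polynomial ℝ) + (X+1) = X := by ring
    rw [hX] at h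
    calc ∑ t ∈ Finset.range (N+1), C ((-1:ℝ)^t * (N.choose t : ℝ)) * (X+1)^(M-t)
        = (∑ t ∈ Finset.range (N+1),
            (-1 : Polynomial ℝ)^t * (X+1)^(N-t) * (N.choose t : Polynomial ℝ)) * (X+1)^(M-N) := by
          rw [Finset.sum_mul]
          apply Finset.sum_congr rfl
          intro t ht
          have ht' : t ≤ N := by simpa [Nat.lt_succ_iff] using ht
          have hMt : M - t = (N - t) + (M - N) := by omega
          rw [hMt, pow_add]
          simp only [map_mul, map_pow, map_neg, map_one, ← C_eq_natCast]
          ring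
      _ = X^N * (X+1)^(M-N) := by rw [← h]
  have hc := congrArg (fun p => Polynomial.coeff p R) key
  simp only [finset_sum_coeff, coeff_C_mul, coeff_X_add_one_pow] at hc
  rw [hc]
  rw [X_pow_mul, Polynomial.coeff_mul_X_pow']
  split_ifs with h1
  · rw [coeff_X_add_one_pow]
  · rfl



noncomputable def harm (n : ℕ) : ℝ := ∑ i ∈ Finset.range n, (1:ℝ)/(i+1)

lemma harm_succ (n : ℕ) : harm (n+1) = harm n + 1/(n+1) := by
  simp [harm, Finset.sum_range_succ]

noncomputable def Pa (a : ℕ) : Polynomial ℝ := ∏ i ∈ Finset.range a, (X + C ((i:ℝ)+1))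

lemma Pa_succ (a : ℕ) : Pa (a+1) = Pa a * (X + C ((a:ℝ)+1)) := Finset.prod_range_succ _ _

lemma fact_ne (m : ℕ) : ((m.factorial : ℝ)) ≠ 0 := by
  exact_mod_cast m.factorial_ne_zero

lemma evalPa (m a : ℕ) : (Pa a).eval (m:ℝ) = ((m+a).factorial : ℝ) / (m.factorial : ℝ) := by
  induction a with
  | zero => simp only [Pa, Finset.prod_range_zero, eval_one, Nat.add_zero]; exact (div_self (fact_ne m)).symm
  | succ a ih =>
    rw [Pa_succ, eval_mul, ih]
    simp only [eval_add, eval_X, eval_C]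
    rw [show m + (a+1) = (m+a) + 1 by ring, Nat.factorial_succ]
    push_cast
    field_simp
    ring

lemma evalDPa (m a : ℕ) : (derivative (Pa a)).eval (m:ℝ)
    = ((m+a).factorial : ℝ) / (m.factorial : ℝ) * (harm (m+a) - harm m) := by
  induction a with
  | zero => simp [Pa]
  | succ a ih =>
    rw [Pa_succ, derivative_mul]
    simp only [derivative_add, derivative_X, derivative_C, add_zero, eval_add, eval_mul, eval_X,
      eval_C, mul_one]
    rw [ih, evalPa, show m + (a+1) = (m+a) + 1 by ring, harm_succ, Nat.factorial_succ]
    have h1 : ((m+a:ℕ):ℝ) + 1 ≠ 0 := by positivity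
    push_cast
    field_simp
    ring

lemma natDegree_Pa (a : ℕ) : (Pa a).natDegree ≤ a := by
  refine le_trans (Polynomial.natDegree_prod_le _ _) ?_
  calc ∑ i ∈ Finset.range a, (X + C ((i:ℝ)+1)).natDegree
      ≤ ∑ _i ∈ Finset.range a, 1 := by
        apply Finset.sum_le_sum
        intro i _
        exact (Polynomial.natDegree_X_add_C _).le
    _ = a := by simp




lemma neg_one_pow_sub_ℝ {t n : ℕ} (h : t ≤ n) : (-1:ℝ)^(n-t) = (-1)^n * (-1)^t := by
  have h2 : (-1:ℝ)^(n-t) * (-1)^t = (-1)^n := by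
    rw [← pow_add, Nat.sub_add_cancel h]
  have h3 : ((-1:ℝ)^t) * ((-1:ℝ)^t) = 1 := by
    rcases Nat.even_or_odd t with he | ho
    · rw [he.neg_one_pow]; norm_num
    · rw [ho.neg_one_pow]; norm_num
  calc (-1:ℝ)^(n-t) = (-1:ℝ)^(n-t) * (((-1:ℝ)^t) * ((-1:ℝ)^t)) := by rw [h3, mul_one]
    _ = (-1)^n * (-1)^t := by rw [← mul_assoc, h2]

noncomputable def Qp (j ν : ℕ) : Polynomial ℝ :=
  ∑ a ∈ Finset.range (j+1), C ((-1:ℝ)^a * ((j+ν).choose (j-a) : ℝ) / (a.factorial : ℝ)) * Pa a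

noncomputable def Rp (j ν : ℕ) : Polynomial ℝ :=
  C ((-1:ℝ)^j / (j.factorial : ℝ)) * ∏ i ∈ Finset.range j, (X - C ((ν:ℝ)+i))

lemma natprod_fact (b : ℕ) : ∏ i ∈ Finset.range b, (b - i) = b.factorial := by
  induction b with
  | zero => simp
  | succ b ih =>
    rw [Finset.prod_range_succ']
    simp only [Nat.succ_sub_succ_eq_sub, Nat.sub_zero]
    rw [ih, Nat.factorial_succ, mul_comm]

lemma prodfact (b : ℕ) : ∏ i ∈ Finset.range b, ((b:ℝ) - i) = (b.factorial : ℝ) := by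
  have h : ∀ i ∈ Finset.range b, ((b:ℝ) - (i:ℝ)) = (((b - i : ℕ)) : ℝ) := by
    intro i hi
    have : i ≤ b := (Finset.mem_range.mp hi).le
    push_cast [Nat.cast_sub this]
    ring
  rw [Finset.prod_congr rfl h, ← Nat.cast_prod, natprod_fact]

lemma evalQ (j ν m : ℕ) (hm : m ≤ j) :
    (Qp j ν).eval ((ν+m : ℕ):ℝ) = if m = j then (-1:ℝ)^j else 0 := by
  have step1 : (Qp j ν).eval ((ν+m : ℕ):ℝ)
      = ∑ a ∈ Finset.range (j+1),
          (-1:ℝ)^a * ((j+ν).choose (j-a) : ℝ) * ((ν+m+a).choose a : ℝ) := by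
    simp only [Qp, eval_finset_sum, eval_mul, eval_C]
    apply Finset.sum_congr rfl
    intro a _
    rw [evalPa]
    rw [Nat.cast_choose ℝ (show a ≤ ν+m+a by omega)]
    rw [show ν+m+a-a = ν+m by omega]
    field_simp
  rw [step1]
  rw [← Finset.sum_range_reflect]
  have step2 : ∀ t ∈ Finset.range (j+1),
      (-1:ℝ)^(j+1-1-t) * ((j+ν).choose (j-(j+1-1-t)) : ℝ) * ((ν+m+(j+1-1-t)).choose (j+1-1-t) : ℝ)
      = (-1:ℝ)^j * ((-1:ℝ)^t * ((j+ν).choose t : ℝ) * (((ν+m+j-t)).choose (ν+m) : ℝ)) := by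
    intro t ht
    have ht' : t ≤ j := by simpa [Nat.lt_succ_iff] using ht
    have e1 : j+1-1-t = j - t := by omega
    have e2 : j - (j - t) = t := by omega
    have e3 : ν+m+(j-t) = ν+m+j-t := by omega
    have e4 : (ν+m+j-t).choose (j-t) = (ν+m+j-t).choose (ν+m) := by
      have h5 : ν+m ≤ ν+m+j-t := by omega
      have h6 : ν+m+j-t - (ν+m) = j - t := by omega
      rw [← h6, Nat.choose_symm h5]
    rw [e1, e2, e3, e4, neg_one_pow_sub_ℝ ht']
    ring
  rw [Finset.sum_congr rfl step2, ← Finset.mul_sum]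
  have step3 : ∑ t ∈ Finset.range (j+1),
        (-1:ℝ)^t * ((j+ν).choose t : ℝ) * (((ν+m+j-t)).choose (ν+m) : ℝ)
      = ∑ t ∈ Finset.range (j+ν+1),
        (-1:ℝ)^t * ((j+ν).choose t : ℝ) * (((ν+m+j-t)).choose (ν+m) : ℝ) := by
    apply Finset.sum_subset
    · apply Finset.range_subset_range.mpr; omega
    · intro t ht1 ht2
      have h1 : j < t := by simp at ht2; omega
      have h1' : t ≤ j + ν := by simp at ht1; omega
      have : (ν+m+j-t).choose (ν+m) = 0 := by
        apply Nat.choose_eq_zero_of_lt; omega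
      rw [this]
      simp
  rw [step3, vand (j+ν) (ν+m+j) (ν+m) (by omega)]
  rcases eq_or_lt_of_le hm with heq | hlt
  · subst heq
    rw [if_pos (by omega), if_pos rfl]
    rw [show ν+m+m-(m+ν) = m by omega, show ν+m-(m+ν) = 0 by omega]
    simp
  · rw [if_neg (by omega), if_neg (by omega)]
    simp

lemma evalR (j ν m : ℕ) (hm : m ≤ j) :
    (Rp j ν).eval ((ν+m : ℕ):ℝ) = if m = j then (-1:ℝ)^j else 0 := by
  rw [Rp, eval_mul, eval_C, eval_prod]
  rcases eq_or_lt_of_le hm with heq | hlt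
  · subst heq
    rw [if_pos rfl]
    have h : ∀ i ∈ Finset.range m, (eval ((ν+m:ℕ):ℝ) (X - C ((ν:ℝ)+i))) = ((m:ℝ) - i) := by
      intro i _
      simp only [eval_sub, eval_X, eval_C]
      push_cast
      ring
    rw [Finset.prod_congr rfl h, prodfact]
    rw [div_mul_cancel₀]
    exact fact_ne m
  · rw [if_neg (by omega)]
    rw [Finset.prod_eq_zero (Finset.mem_range.mpr hlt)]
    · ring
    · simp only [eval_sub, eval_X, eval_C]
      push_cast
      ring

lemma QeqR (j ν : ℕ) : Qp j ν = Rp j ν := by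
  have hinj : Function.Injective (fun m : ℕ => ((ν+m : ℕ):ℝ)) := by
    intro x y hxy
    simp only at hxy
    have : (ν+x:ℕ) = (ν+y:ℕ) := by exact_mod_cast hxy
    omega
  apply Polynomial.eq_of_degrees_lt_of_eval_finset_eq
      ((Finset.range (j+1)).image (fun m : ℕ => ((ν+m : ℕ):ℝ)))
  · rw [Finset.card_image_of_injective _ hinj, Finset.card_range]
    refine lt_of_le_of_lt (Polynomial.degree_le_natDegree) ?_
    have hq : (Qp j ν).natDegree ≤ j := by
      apply Polynomial.natDegree_sum_le_of_forall_le
      intro a ha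
      refine le_trans (Polynomial.natDegree_C_mul_le _ _) ?_
      exact le_trans (natDegree_Pa a) (by simp at ha; omega)
    exact_mod_cast lt_of_le_of_lt (Nat.cast_le.mpr hq) (by exact_mod_cast Nat.lt_succ_self j)
  · rw [Finset.card_image_of_injective _ hinj, Finset.card_range]
    refine lt_of_le_of_lt (Polynomial.degree_le_natDegree) ?_
    have hr : (Rp j ν).natDegree ≤ j := by
      refine le_trans (Polynomial.natDegree_C_mul_le _ _) ?_
      refine le_trans (Polynomial.natDegree_prod_le _ _) ?_
      refine le_of_eq ?_
      calc ∑ i ∈ Finset.range j, (X - C ((ν:ℝ)+i)).natDegree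
          = ∑ _i ∈ Finset.range j, 1 := by
            apply Finset.sum_congr rfl; intro i _; exact Polynomial.natDegree_X_sub_C _
        _ = j := by simp
    exact_mod_cast lt_of_le_of_lt (Nat.cast_le.mpr hr) (by exact_mod_cast Nat.lt_succ_self j)
  · intro x hx
    obtain ⟨m, hm, rfl⟩ := Finset.mem_image.mp hx
    have hm' : m ≤ j := by simp at hm; omega
    rw [evalQ j ν m hm', evalR j ν m hm']




lemma sq_neg_one (t : ℕ) : (-1:ℝ)^t * (-1)^t = 1 := by
  rw [← pow_add]
  exact Even.neg_one_pow ⟨t, by ring⟩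

lemma evalProd_zero (j ν b : ℕ) (hb : b < j) :
    eval ((ν+b:ℕ):ℝ) (∏ i ∈ Finset.range j, (X - C ((ν:ℝ)+i))) = 0 := by
  rw [eval_prod]
  apply Finset.prod_eq_zero (Finset.mem_range.mpr hb)
  simp only [eval_sub, eval_X, eval_C]
  push_cast
  ring

lemma evalProd_fact (ν b : ℕ) :
    eval ((ν+b:ℕ):ℝ) (∏ i ∈ Finset.range b, (X - C ((ν:ℝ)+i))) = (b.factorial : ℝ) := by
  rw [eval_prod]
  rw [← prodfact b]
  apply Finset.prod_congr rfl
  intro i _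
  simp only [eval_sub, eval_X, eval_C]
  push_cast
  ring

lemma evalDprod (ν b j : ℕ) (hb : b + 1 ≤ j) :
    eval ((ν+b:ℕ):ℝ) (derivative (∏ i ∈ Finset.range j, (X - C ((ν:ℝ)+i))))
    = (-1:ℝ)^(j-1-b) * (b.factorial : ℝ) * ((j-1-b).factorial : ℝ) := by
  induction j, hb using Nat.le_induction with
  | base =>
    rw [Finset.prod_range_succ, derivative_mul]
    simp only [derivative_sub, derivative_X, derivative_C, sub_zero, eval_add, eval_mul,
      eval_sub, eval_X, eval_C, mul_one]
    rw [evalProd_fact]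
    push_cast
    simp [show b+1-1-b = 0 by omega]
  | succ j hj ih =>
    rw [Finset.prod_range_succ, derivative_mul]
    simp only [derivative_sub, derivative_X, derivative_C, sub_zero, eval_add, eval_mul,
      eval_sub, eval_X, eval_C, mul_one]
    rw [ih, evalProd_zero j ν b (by omega)]
    have e1 : j + 1 - 1 - b = (j - 1 - b) + 1 := by omega
    have e2 : ((ν+b:ℕ):ℝ) - ((ν:ℝ) + j) = -(((j-b:ℕ)):ℝ) := by
      push_cast [Nat.cast_sub (by omega : b ≤ j)]
      ring
    rw [e1, e2, pow_succ]
    have e3 : (j - b) = (j - 1 - b) + 1 := by omega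
    rw [e3, Nat.factorial_succ]
    push_cast
    ring

lemma evalDR (j ν b : ℕ) (hb : b < j) :
    (derivative (Rp j ν)).eval ((ν+b:ℕ):ℝ)
      = -((-1:ℝ)^b * (b.factorial : ℝ) * ((j-1-b).factorial : ℝ) / (j.factorial : ℝ)) := by
  rw [Rp, derivative_C_mul, eval_mul, eval_C, evalDprod ν b j hb]
  have hsign : (-1:ℝ)^j * (-1:ℝ)^(j-1-b) = -(-1:ℝ)^b := by
    rw [neg_one_pow_sub_ℝ (show b ≤ j-1 by omega)]
    rw [show j = (j-1)+1 by omega, pow_succ]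
    have := sq_neg_one (j-1)
    calc (-1:ℝ)^(j-1) * (-1) * ((-1:ℝ)^(j-1) * (-1)^b)
        = ((-1:ℝ)^(j-1) * (-1:ℝ)^(j-1)) * (-1) * (-1)^b := by ring
      _ = -(-1:ℝ)^b := by rw [this]; ring
  rw [div_mul_eq_mul_div, neg_div', div_left_inj' (fact_ne j)]
  calc (-1:ℝ)^j * ((-1:ℝ)^(j-1-b) * (b.factorial:ℝ) * ((j-1-b).factorial:ℝ))
      = ((-1:ℝ)^j * (-1:ℝ)^(j-1-b)) * ((b.factorial:ℝ) * ((j-1-b).factorial:ℝ)) := by ring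
    _ = -((-1:ℝ)^b * (b.factorial:ℝ) * ((j-1-b).factorial:ℝ)) := by rw [hsign]; ring



lemma measurable_logpow (m : ℕ) :
    Measurable (fun x : ℝ => Real.log x * x^m * Real.exp (-x)) := by
  exact (Real.measurable_log.mul (measurable_id.pow_const m)).mul
    (Real.measurable_exp.comp measurable_neg)

lemma abs_log_le (x : ℝ) (hx : 0 < x) : |Real.log x| ≤ 2 * x ^ (-(1/2) : ℝ) + x := by
  rcases le_or_gt 1 x with h1 | h1
  · have h2 : Real.log x ≤ x := (Real.log_le_sub_one_of_pos hx).trans (by linarith)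
    have h3 : 0 ≤ Real.log x := Real.log_nonneg h1
    have h4 : (0:ℝ) ≤ 2 * x ^ (-(1/2) : ℝ) := by positivity
    rw [abs_of_nonneg h3]; linarith
  · have h3 : Real.log x ≤ 0 := Real.log_nonpos hx.le h1.le
    rw [abs_of_nonpos h3]
    have hy : (0:ℝ) < x ^ (-(1/2) : ℝ) := Real.rpow_pos_of_pos hx _
    have h5 : Real.log (x ^ (-(1/2) : ℝ)) = -(1/2) * Real.log x := Real.log_rpow hx _
    have h6 : Real.log (x ^ (-(1/2) : ℝ)) ≤ x ^ (-(1/2) : ℝ) - 1 :=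
      Real.log_le_sub_one_of_pos hy
    nlinarith [hx]

lemma integrable_pow_exp (m : ℕ) :
    IntegrableOn (fun x : ℝ => x^m * Real.exp (-x)) (Ioi 0) := by
  have h := Real.GammaIntegral_convergent (s := (m:ℝ)+1) (by positivity)
  apply h.congr_fun ?_ measurableSet_Ioi
  intro x hx
  dsimp only
  rw [show ((m:ℝ)+1-1) = (m:ℝ) by ring, Real.rpow_natCast]
  ring

lemma integral_pow_exp (m : ℕ) :
    ∫ x in Ioi (0:ℝ), x^m * Real.exp (-x) = (m.factorial : ℝ) := by
  have h := Real.Gamma_eq_integral (s := (m:ℝ)+1) (by positivity)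
  have h2 : Real.Gamma ((m:ℝ)+1) = (m.factorial : ℝ) := by
    exact_mod_cast Real.Gamma_nat_eq_factorial m
  rw [h2] at h
  rw [h]
  apply setIntegral_congr_fun measurableSet_Ioi
  intro x hx
  dsimp only
  rw [show ((m:ℝ)+1-1) = (m:ℝ) by ring, Real.rpow_natCast]
  ring

lemma integrable_log_pow_exp (m : ℕ) :
    IntegrableOn (fun x : ℝ => Real.log x * x^m * Real.exp (-x)) (Ioi 0) := by
  have hg1 := Real.GammaIntegral_convergent (s := (m:ℝ)+1/2) (by positivity)
  have hg2 := Real.GammaIntegral_convergent (s := (m:ℝ)+2) (by positivity)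
  have hg : IntegrableOn (fun x : ℝ =>
      2 * (Real.exp (-x) * x ^ ((m:ℝ)+1/2-1)) + Real.exp (-x) * x ^ ((m:ℝ)+2-1)) (Ioi 0) :=
    (hg1.const_mul 2).add hg2
  apply Integrable.mono hg ((measurable_logpow m).aestronglyMeasurable.restrict)
  rw [ae_restrict_iff' measurableSet_Ioi]
  apply ae_of_all
  intro x hx
  have hx' : (0:ℝ) < x := hx
  have hb := abs_log_le x hx'
  have hpos1 : (0:ℝ) < x ^ ((m:ℝ)+1/2-1) := Real.rpow_pos_of_pos hx' _
  have hpos2 : (0:ℝ) < x ^ ((m:ℝ)+2-1) := Real.rpow_pos_of_pos hx' _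
  have hexp : (0:ℝ) < Real.exp (-x) := Real.exp_pos _
  rw [Real.norm_eq_abs, Real.norm_eq_abs]
  have hrhs : 0 ≤ 2 * (Real.exp (-x) * x ^ ((m:ℝ)+1/2-1)) + Real.exp (-x) * x ^ ((m:ℝ)+2-1) := by
    positivity
  rw [abs_of_nonneg hrhs]
  have e1 : x ^ (-(1/2):ℝ) * x^m = x ^ ((m:ℝ)+1/2-1) := by
    rw [← Real.rpow_natCast x m, ← Real.rpow_add hx']
    congr 1
    ring
  have e2 : x * x^m = x ^ ((m:ℝ)+2-1) := by
    rw [show (m:ℝ)+2-1 = ((m+1:ℕ):ℝ) by push_cast; ring, Real.rpow_natCast]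
    ring
  calc |Real.log x * x^m * Real.exp (-x)| = |Real.log x| * x^m * Real.exp (-x) := by
        rw [abs_mul, abs_mul, abs_of_nonneg (pow_nonneg hx'.le m), abs_of_nonneg hexp.le]
    _ ≤ (2 * x ^ (-(1/2):ℝ) + x) * x^m * Real.exp (-x) := by
        have : (0:ℝ) ≤ x^m * Real.exp (-x) := by positivity
        nlinarith [mul_le_mul_of_nonneg_right hb this]
    _ = 2 * (Real.exp (-x) * (x ^ (-(1/2):ℝ) * x^m)) + Real.exp (-x) * (x * x^m) := by ring
    _ = 2 * (Real.exp (-x) * x ^ ((m:ℝ)+1/2-1)) + Real.exp (-x) * x ^ ((m:ℝ)+2-1) := by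
        rw [e1, e2]

noncomputable def Ii (m : ℕ) : ℝ := ∫ x in Ioi (0:ℝ), Real.log x * x^m * Real.exp (-x)

lemma I_rec (m : ℕ) : Ii (m+1) = (m+1) * Ii m + (m.factorial : ℝ) := by
  set f : ℝ → ℝ := fun x => Real.log x * x^(m+1) * Real.exp (-x) with hf
  set f' : ℝ → ℝ := fun x => x^m * Real.exp (-x)
    + (((m:ℝ)+1) * (Real.log x * x^m * Real.exp (-x)) - Real.log x * x^(m+1) * Real.exp (-x))
    with hf'
  have hderiv : ∀ x ∈ Ioi (0:ℝ), HasDerivAt f (f' x) x := by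
    intro x hx
    have hx' : (0:ℝ) < x := hx
    have h1 : HasDerivAt Real.log x⁻¹ x := Real.hasDerivAt_log (ne_of_gt hx')
    have h2 : HasDerivAt (fun y : ℝ => y^(m+1)) (((m:ℝ)+1) * x^m) x := by
      simpa using hasDerivAt_pow (m+1) x
    have h3 : HasDerivAt (fun y : ℝ => Real.exp (-y)) (-Real.exp (-x)) x := by
      simpa [Function.comp_def] using (Real.hasDerivAt_exp (-x)).comp x (hasDerivAt_neg x)
    have h4 := (h1.mul h2).mul h3
    refine h4.congr_deriv ?_
    rw [hf']
    field_simp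
    simp only [Pi.mul_apply]
    ring
  have hcont : ContinuousWithinAt f (Ici 0) 0 := by
    rw [← Set.Ioi_insert]
    unfold ContinuousWithinAt
    rw [nhdsWithin_insert]
    have hf0 : f 0 = 0 := by simp [hf]
    rw [hf0]
    apply Filter.Tendsto.sup
    · simpa [hf0] using tendsto_pure_nhds f 0
    · have htl : Filter.Tendsto (fun x : ℝ => Real.log x * x^(m+1))
          (nhdsWithin 0 (Ioi 0)) (nhds 0) := by
        have h := tendsto_log_mul_rpow_nhdsGT_zero (r := (m:ℝ)+1) (by positivity)
        apply h.congr'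
        filter_upwards [self_mem_nhdsWithin] with x hx
        rw [show ((m:ℝ)+1) = ((m+1:ℕ):ℝ) by push_cast; ring, Real.rpow_natCast]
      have hte : Filter.Tendsto (fun x : ℝ => Real.exp (-x))
          (nhdsWithin 0 (Ioi 0)) (nhds 1) := by
        have : Filter.Tendsto (fun x : ℝ => Real.exp (-x)) (nhds 0) (nhds 1) := by
          have := (Real.continuous_exp.comp continuous_neg).tendsto 0
          simpa [Function.comp_def] using this
        exact this.mono_left nhdsWithin_le_nhds
      have := htl.mul hte
      simpa using this
  have htend : Filter.Tendsto f Filter.atTop (nhds 0) := by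
    refine squeeze_zero_norm' ?_ (tendsto_pow_mul_exp_neg_atTop_nhds_zero (m+2))
    filter_upwards [Filter.eventually_ge_atTop (1:ℝ)] with x hx
    have hx' : (0:ℝ) < x := by linarith
    have hlog : |Real.log x| ≤ x := by
      rw [abs_of_nonneg (Real.log_nonneg hx)]
      exact (Real.log_le_sub_one_of_pos hx').trans (by linarith)
    have : ‖f x‖ = |Real.log x| * x^(m+1) * Real.exp (-x) := by
      rw [hf]
      simp only [Real.norm_eq_abs, abs_mul]
      rw [abs_of_nonneg (pow_nonneg hx'.le (m+1)), abs_of_nonneg (Real.exp_pos _).le]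
    rw [this]
    have h2 : |Real.log x| * x^(m+1) ≤ x * x^(m+1) :=
      mul_le_mul_of_nonneg_right hlog (pow_nonneg hx'.le _)
    have h3 : x * x^(m+1) = x^(m+2) := by ring
    nlinarith [Real.exp_pos (-x)]
  have hint : IntegrableOn f' (Ioi (0:ℝ)) := by
    apply (integrable_pow_exp m).add
    exact ((integrable_log_pow_exp m).const_mul _).sub (integrable_log_pow_exp (m+1))
  have key := integral_Ioi_of_hasDerivAt_of_tendsto hcont hderiv hint htend
  have hf0 : f 0 = 0 := by simp [hf]
  rw [hf0, sub_zero] at key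
  have split : ∫ x in Ioi (0:ℝ), f' x
      = (∫ x in Ioi (0:ℝ), x^m * Real.exp (-x))
        + ((((m:ℝ)+1) * ∫ x in Ioi (0:ℝ), Real.log x * x^m * Real.exp (-x))
          - ∫ x in Ioi (0:ℝ), Real.log x * x^(m+1) * Real.exp (-x)) := by
    rw [hf']
    have i1 := integrable_pow_exp m
    have i2 : IntegrableOn (fun x:ℝ => ((m:ℝ)+1) * (Real.log x * x^m * Real.exp (-x))
        - Real.log x * x^(m+1) * Real.exp (-x)) (Ioi 0) := by
      exact ((integrable_log_pow_exp m).const_mul _).sub (integrable_log_pow_exp (m+1))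
    rw [MeasureTheory.integral_add i1 i2,
      MeasureTheory.integral_sub ((integrable_log_pow_exp m).const_mul _)
        (integrable_log_pow_exp (m+1)),
      MeasureTheory.integral_const_mul]
  rw [key, integral_pow_exp] at split
  have : Ii (m+1) = ((m:ℝ)+1) * Ii m + (m.factorial : ℝ) := by
    unfold Ii
    linarith [split]
  exact this

lemma I_formula (m : ℕ) : Ii m = (m.factorial : ℝ) * (harm m + Ii 0) := by
  induction m with
  | zero => simp [harm]
  | succ m ih =>
    rw [I_rec, ih, show harm (m+1) = harm m + 1/((m:ℝ)+1) by
      simp [harm, Finset.sum_range_succ], Nat.factorial_succ]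
    have : ((m:ℝ)+1) ≠ 0 := by positivity
    push_cast
    field_simp
    ring




lemma I_decomp (m a : ℕ) : Ii (m+a)
    = (m.factorial:ℝ) * (derivative (Pa a)).eval (m:ℝ) + (Pa a).eval (m:ℝ) * Ii m := by
  rw [I_formula (m+a), I_formula m, evalPa, evalDPa]
  field_simp
  ring

lemma lag_inner_sum (j ν b : ℕ) (hb : b < j) :
    ∑ a ∈ Finset.range (j+1),
        ((-1:ℝ)^a * ((j+ν).choose (j-a) : ℝ) / (a.factorial : ℝ)) * Ii (ν+b+a)
      = -(((ν+b).factorial : ℝ) *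
          ((-1:ℝ)^b * (b.factorial:ℝ) * ((j-1-b).factorial:ℝ) / (j.factorial:ℝ))) := by
  have step1 : ∀ a ∈ Finset.range (j+1),
      ((-1:ℝ)^a * ((j+ν).choose (j-a) : ℝ) / (a.factorial : ℝ)) * Ii (ν+b+a)
      = (((ν+b).factorial:ℝ) *
          (((-1:ℝ)^a * ((j+ν).choose (j-a) : ℝ) / (a.factorial : ℝ)) *
            (derivative (Pa a)).eval (((ν+b:ℕ)):ℝ)))
        + Ii (ν+b) * (((-1:ℝ)^a * ((j+ν).choose (j-a) : ℝ) / (a.factorial : ℝ)) *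
            (Pa a).eval (((ν+b:ℕ)):ℝ)) := by
    intro a _
    rw [I_decomp (ν+b) a]
    ring
  rw [Finset.sum_congr rfl step1, Finset.sum_add_distrib, ← Finset.mul_sum, ← Finset.mul_sum]
  have hevalQ : (Qp j ν).eval ((ν+b:ℕ):ℝ)
      = ∑ a ∈ Finset.range (j+1),
          ((-1:ℝ)^a * ((j+ν).choose (j-a) : ℝ) / (a.factorial : ℝ)) * (Pa a).eval ((ν+b:ℕ):ℝ) := by
    rw [Qp, eval_finset_sum]
    apply Finset.sum_congr rfl
    intro a _
    rw [eval_mul, eval_C]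
  have hderQ : (derivative (Qp j ν)).eval ((ν+b:ℕ):ℝ)
      = ∑ a ∈ Finset.range (j+1),
          ((-1:ℝ)^a * ((j+ν).choose (j-a) : ℝ) / (a.factorial : ℝ))
            * (derivative (Pa a)).eval ((ν+b:ℕ):ℝ) := by
    rw [Qp, derivative_sum, eval_finset_sum]
    apply Finset.sum_congr rfl
    intro a _
    rw [derivative_C_mul, eval_mul, eval_C]
  rw [← hevalQ, ← hderQ, QeqR, evalR j ν b hb.le, if_neg (by omega), evalDR j ν b hb]
  ring

lemma cast_fact_div (p q : ℕ) (hpq : q ≤ p) :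
    ((p.choose q : ℕ) : ℝ) * ((p - q).factorial : ℝ) * (q.factorial : ℝ) = (p.factorial : ℝ) := by
  rw [show ((p.choose q : ℕ):ℝ) * ((p-q).factorial : ℝ) * (q.factorial:ℝ)
      = ((p.choose q * q.factorial * (p-q).factorial : ℕ) : ℝ) by push_cast; ring]
  rw [Nat.choose_mul_factorial_mul_factorial hpq]

lemma final_sum (j k ν : ℕ) (h : k < j) :
    ∑ b ∈ Finset.range (k+1),
        ((k+ν).choose (k-b) : ℝ) * ((ν+b).factorial:ℝ) * ((j-1-b).factorial:ℝ)
      = ((k+ν).factorial:ℝ) * ((j-1-k).factorial:ℝ) * (j.choose k : ℝ) := by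
  have step1 : ∀ b ∈ Finset.range (k+1),
      ((k+ν).choose (k-b) : ℝ) * ((ν+b).factorial:ℝ) * ((j-1-b).factorial:ℝ)
      = ((k+ν).factorial:ℝ) * (((j-1-b).factorial:ℝ) / ((k-b).factorial:ℝ)) := by
    intro b hb
    have hb' : b ≤ k := by simp at hb; omega
    have e1 := cast_fact_div (k+ν) (k-b) (by omega)
    rw [show k+ν-(k-b) = ν+b by omega] at e1
    rw [← e1]
    field_simp
  rw [Finset.sum_congr rfl step1, ← Finset.mul_sum]
  rw [← Finset.sum_range_reflect]
  have step2 : ∀ c ∈ Finset.range (k+1),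
      ((j-1-(k+1-1-c)).factorial:ℝ) / ((k-(k+1-1-c)).factorial:ℝ)
      = ((j-1-k).factorial:ℝ) * (((c+(j-1-k)).choose c : ℕ) : ℝ) := by
    intro c hc
    have hc' : c ≤ k := by simp at hc; omega
    have e1 : j-1-(k+1-1-c) = (j-1-k)+c := by omega
    have e2 : k-(k+1-1-c) = c := by omega
    rw [e1, e2, show j-1-k+c = c+(j-1-k) by omega]
    have e3 := cast_fact_div ((j-1-k)+c) c (by omega)
    rw [show (j-1-k)+c-c = j-1-k by omega] at e3
    rw [show (j-1-k)+c = c+(j-1-k) by omega] at e3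
    rw [← e3]
    field_simp
  rw [Finset.sum_congr rfl step2, ← Finset.mul_sum]
  have step3 : ∑ c ∈ Finset.range (k+1), (((c+(j-1-k)).choose c : ℕ) : ℝ) = (j.choose k : ℝ) := by
    have e4 : ∀ c ∈ Finset.range (k+1), ((c+(j-1-k)).choose c : ℕ) = (c+(j-1-k)).choose (j-1-k) :=
      fun c _ => Nat.choose_symm_add
    rw [show ∑ c ∈ Finset.range (k+1), (((c+(j-1-k)).choose c : ℕ) : ℝ)
        = ((∑ c ∈ Finset.range (k+1), (c+(j-1-k)).choose c : ℕ) : ℝ) by push_cast; ring]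
    rw [Finset.sum_congr rfl e4, Nat.sum_range_add_choose k (j-1-k)]
    rw [show k+(j-1-k)+1 = j by omega, show (j-1-k)+1 = j-k by omega]
    rw [show j.choose (j-k) = j.choose (j-(j-k)) from (Nat.choose_symm (by omega)).symm]
    rw [show j-(j-k) = k by omega]
  rw [step3]
  ring





theorem laguerre_log_weighted_integral (j k ν : ℕ) (h : k < j) :
    ∫ x in Set.Ioi (0 : ℝ),
      Real.log x * x ^ ν * Real.exp (-x) * assocLaguerre j ν x * assocLaguerre k ν x
      = (Nat.factorial (k + ν) : ℝ) / ((Nat.factorial k : ℝ) * ((k : ℝ) - (j : ℝ))) := by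
  have hexp : ∀ x : ℝ,
      Real.log x * x ^ ν * Real.exp (-x) * assocLaguerre j ν x * assocLaguerre k ν x
      = ∑ a ∈ Finset.range (j+1), ∑ b ∈ Finset.range (k+1),
          (((-1:ℝ)^a * ((j+ν).choose (j-a):ℝ) / (a.factorial:ℝ)) *
           ((-1:ℝ)^b * ((k+ν).choose (k-b):ℝ) / (b.factorial:ℝ)))
            * (Real.log x * x^(ν+a+b) * Real.exp (-x)) := by
    intro x
    unfold assocLaguerre
    rw [show (∑ a ∈ Finset.range (j+1), ∑ b ∈ Finset.range (k+1),
          (((-1:ℝ)^a * ((j+ν).choose (j-a):ℝ) / (a.factorial:ℝ)) *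
           ((-1:ℝ)^b * ((k+ν).choose (k-b):ℝ) / (b.factorial:ℝ)))
            * (Real.log x * x^(ν+a+b) * Real.exp (-x)))
        = ∑ b ∈ Finset.range (k+1), ∑ a ∈ Finset.range (j+1),
          (((-1:ℝ)^a * ((j+ν).choose (j-a):ℝ) / (a.factorial:ℝ)) *
           ((-1:ℝ)^b * ((k+ν).choose (k-b):ℝ) / (b.factorial:ℝ)))
            * (Real.log x * x^(ν+a+b) * Real.exp (-x)) from Finset.sum_comm]
    rw [Finset.mul_sum]
    apply Finset.sum_congr rfl
    intro b _
    rw [Finset.mul_sum, Finset.sum_mul]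
    apply Finset.sum_congr rfl
    intro a _
    rw [show x^(ν+a+b) = x^ν * x^a * x^b by rw [pow_add, pow_add]]
    rw [neg_pow x a, neg_pow x b]
    ring
  rw [MeasureTheory.setIntegral_congr_fun measurableSet_Ioi (fun x _ => hexp x)]
  rw [MeasureTheory.integral_finset_sum _ (fun a _ =>
    integrable_finset_sum _ (fun b _ => (integrable_log_pow_exp (ν+a+b)).const_mul _))]
  have hstep2 : ∀ a ∈ Finset.range (j+1),
      (∫ x in Ioi (0:ℝ), ∑ b ∈ Finset.range (k+1),
          (((-1:ℝ)^a * ((j+ν).choose (j-a):ℝ) / (a.factorial:ℝ)) *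
           ((-1:ℝ)^b * ((k+ν).choose (k-b):ℝ) / (b.factorial:ℝ)))
            * (Real.log x * x^(ν+a+b) * Real.exp (-x)))
      = ∑ b ∈ Finset.range (k+1),
          (((-1:ℝ)^a * ((j+ν).choose (j-a):ℝ) / (a.factorial:ℝ)) *
           ((-1:ℝ)^b * ((k+ν).choose (k-b):ℝ) / (b.factorial:ℝ))) * Ii (ν+a+b) := by
    intro a _
    rw [MeasureTheory.integral_finset_sum _ (fun b _ =>
      (integrable_log_pow_exp (ν+a+b)).const_mul _)]
    apply Finset.sum_congr rfl
    intro b _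
    rw [MeasureTheory.integral_const_mul]
    rfl
  rw [Finset.sum_congr rfl hstep2, Finset.sum_comm]
  have hstep3 : ∀ b ∈ Finset.range (k+1),
      (∑ a ∈ Finset.range (j+1),
          (((-1:ℝ)^a * ((j+ν).choose (j-a):ℝ) / (a.factorial:ℝ)) *
           ((-1:ℝ)^b * ((k+ν).choose (k-b):ℝ) / (b.factorial:ℝ))) * Ii (ν+a+b))
      = (-(1:ℝ)/(j.factorial:ℝ)) *
          (((k+ν).choose (k-b):ℝ) * ((ν+b).factorial:ℝ) * ((j-1-b).factorial:ℝ)) := by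
    intro b hb
    have hb' : b < j := by simp at hb; omega
    have e1 : ∀ a ∈ Finset.range (j+1),
        (((-1:ℝ)^a * ((j+ν).choose (j-a):ℝ) / (a.factorial:ℝ)) *
           ((-1:ℝ)^b * ((k+ν).choose (k-b):ℝ) / (b.factorial:ℝ))) * Ii (ν+a+b)
        = ((-1:ℝ)^b * ((k+ν).choose (k-b):ℝ) / (b.factorial:ℝ)) *
            (((-1:ℝ)^a * ((j+ν).choose (j-a):ℝ) / (a.factorial:ℝ)) * Ii (ν+b+a)) := by
      intro a _
      rw [show ν+a+b = ν+b+a by omega]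
      ring
    rw [Finset.sum_congr rfl e1, ← Finset.mul_sum, lag_inner_sum j ν b hb']
    calc ((-1:ℝ)^b * ((k+ν).choose (k-b):ℝ) / (b.factorial:ℝ)) *
          (-(((ν+b).factorial : ℝ) *
          ((-1:ℝ)^b * (b.factorial:ℝ) * ((j-1-b).factorial:ℝ) / (j.factorial:ℝ))))
        = -( ((-1:ℝ)^b * (-1:ℝ)^b) * ((b.factorial:ℝ)/(b.factorial:ℝ)) *
            (((k+ν).choose (k-b):ℝ) * ((ν+b).factorial:ℝ) * ((j-1-b).factorial:ℝ)
              / (j.factorial:ℝ))) := by ring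
      _ = (-(1:ℝ)/(j.factorial:ℝ)) *
          (((k+ν).choose (k-b):ℝ) * ((ν+b).factorial:ℝ) * ((j-1-b).factorial:ℝ)) := by
          rw [sq_neg_one, div_self (fact_ne b)]
          ring
  rw [Finset.sum_congr rfl hstep3, ← Finset.mul_sum, final_sum j k ν h]
  have hcjk := cast_fact_div j k h.le
  have e5 : ((j-k).factorial:ℝ) = ((j-k:ℕ):ℝ) * ((j-1-k).factorial:ℝ) := by
    rw [show j-k = (j-1-k)+1 by omega, Nat.factorial_succ]
    push_cast
    ring
  have e6 : (k:ℝ) - (j:ℝ) = -((j-k:ℕ):ℝ) := by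
    push_cast [Nat.cast_sub h.le]
    ring
  have hjk0 : ((j-k:ℕ):ℝ) ≠ 0 := Nat.cast_ne_zero.mpr (by omega)
  rw [e5] at hcjk
  rw [e6]
  field_simp
  linear_combination (-1:ℝ) * hcjk


end LagAux
end

section
/- Let (X, Y) be bivariate Gaussian with common mean μ, common variance σ² > 0, and correlation ρ ∈ (−1,1). Then for threshold I_th ≥ μ, P(X > I_th, Y > I_th) = (1/π) ∫₀^{π/4 + arcsin(ρ)/2} exp(−Ĩ²/(2 sin²θ)) dθ, where Ĩ = (I_th − μ)/σ. -/
open MeasureTheory Real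

section CraigAux
open Set

lemma integral_Ioi_comp_add (f : ℝ → ℝ) (c A : ℝ) :
    ∫ x in Ioi A, f (c + x) = ∫ y in Ioi (c + A), f y := by
  rw [← integral_indicator measurableSet_Ioi, ← integral_indicator measurableSet_Ioi,
    ← integral_add_left_eq_self (fun y => (Ioi (c + A)).indicator f y) c]
  congr 1
  ext x
  by_cases h : A < x <;> simp [Set.indicator, h]

lemma integral_Ioi_comp_affine (f : ℝ → ℝ) (c : ℝ) {b : ℝ} (hb : 0 < b) (A : ℝ) :
    ∫ x in Ioi A, f (c + b * x) = b⁻¹ * ∫ y in Ioi (c + b * A), f y := by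
  rw [integral_comp_mul_left_Ioi (fun w => f (c + w)) A hb, integral_Ioi_comp_add f c (b*A),
    smul_eq_mul]

lemma rint (m : ℝ) : ∫ r in Ioi m, r * Real.exp (-(r^2/2)) = Real.exp (-(m^2/2)) := by
  have hderiv : ∀ x ∈ Ioi m, HasDerivAt (fun r => -Real.exp (-(r^2/2)))
      (x * Real.exp (-(x^2/2))) x := by
    intro x _
    have h1 : HasDerivAt (fun r : ℝ => -(r^2/2)) (-x) x := by
      have h := ((hasDerivAt_pow 2 x).div_const 2).neg
      exact h.congr_deriv (by norm_num)
    have h2 := (h1.exp).neg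
    exact h2.congr_deriv (by ring)
  have hint : IntegrableOn (fun r : ℝ => r * Real.exp (-(r^2/2))) (Ioi m) := by
    have h3 := integrable_mul_exp_neg_mul_sq (b := (1/2 : ℝ)) (by norm_num)
    have h2 : (fun r : ℝ => r * Real.exp (-(r^2/2))) = fun r => r * Real.exp (-(1/2) * r^2) := by
      ext r; ring_nf
    rw [h2]
    exact h3.integrableOn
  have htend : Filter.Tendsto (fun r => -Real.exp (-(r^2/2))) Filter.atTop (nhds 0) := by
    rw [← neg_zero]
    apply Filter.Tendsto.neg
    apply Real.tendsto_exp_atBot.comp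
    apply Filter.tendsto_neg_atTop_atBot.comp
    exact (Filter.tendsto_pow_atTop two_ne_zero).atTop_div_const (by norm_num)
  have := integral_Ioi_of_hasDerivAt_of_tendsto
    (f := fun r => -Real.exp (-(r^2/2))) (Continuous.continuousWithinAt (by fun_prop)) hderiv hint htend
  rw [this]; ring

set_option maxHeartbeats 1000000 in
lemma gauss_core (a ρ : ℝ) (ha : 0 ≤ a) (hρ : -1 < ρ) (hρ' : ρ < 1) :
    (∫ u in Ioi a, ∫ z in Ioi ((a - ρ*u)/Real.sqrt (1-ρ^2)), Real.exp (-((u^2+z^2)/2)))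
      = 2 * ∫ θ in (0:ℝ)..(π/4 + Real.arcsin ρ/2),
          Real.exp (-(a^2/(2 * Real.sin θ^2))) := by
  have hs2 : Real.sqrt (1 - ρ^2) ^ 2 = 1 - ρ^2 := Real.sq_sqrt (by nlinarith)
  set s := Real.sqrt (1 - ρ^2) with hs_def
  have hs : 0 < s := Real.sqrt_pos.mpr (by nlinarith)
  set γ := Real.arccos ρ with hγ_def
  have hcos : Real.cos γ = ρ := Real.cos_arccos hρ.le hρ'.le
  have hsin : Real.sin γ = s := Real.sin_arccos ρ
  have hγ0 : 0 < γ := Real.arccos_pos.mpr hρ'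
  have hγπ : γ < π := lt_of_le_of_ne (Real.arccos_le_pi ρ)
    (fun h => by rw [h, Real.cos_pi] at hcos; linarith)
  -- the region and integrand
  set f2 : ℝ × ℝ → ℝ := fun p => Real.exp (-((p.1^2+p.2^2)/2)) with hf2_def
  set S : Set (ℝ × ℝ) := {p | a < p.1 ∧ (a - ρ*p.1)/s < p.2} with hS_def
  have hSmeas : MeasurableSet S := by
    apply MeasurableSet.inter
    · exact measurableSet_lt measurable_const measurable_fst
    · exact measurableSet_lt ((measurable_const.sub (measurable_fst.const_mul ρ)).div_const s)
        measurable_snd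
  have hf2cont : Continuous f2 := by fun_prop
  have hf2int : Integrable f2 := by
    have h1 : Integrable (fun t : ℝ => Real.exp (-(1/2) * t^2)) :=
      integrable_exp_neg_mul_sq (by norm_num)
    have : f2 = fun p : ℝ × ℝ => Real.exp (-(1/2) * p.1^2) * Real.exp (-(1/2) * p.2^2) := by
      ext p; rw [hf2_def, ← Real.exp_add]; ring_nf
    rw [this, Measure.volume_eq_prod]
    exact h1.mul_prod h1
  set G : ℝ × ℝ → ℝ := S.indicator f2 with hG_def
  have hGint : Integrable G := hf2int.indicator hSmeas
  have hGmeas : Measurable G := (hf2cont.measurable).indicator hSmeas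
  -- Step 1 : iterated integral equals ∫ G
  have step1 : (∫ u in Ioi a, ∫ z in Ioi ((a - ρ*u)/s), Real.exp (-((u^2+z^2)/2)))
      = ∫ p, G p := by
    have hprod : (∫ p, G p) = ∫ u, ∫ z, G (u, z) := by
      rw [Measure.volume_eq_prod]
      exact integral_prod G (by rwa [← Measure.volume_eq_prod])
    rw [hprod]
    have hfib : ∀ u : ℝ, (∫ z, G (u, z))
        = (Ioi a).indicator (fun u => ∫ z in Ioi ((a - ρ*u)/s), Real.exp (-((u^2+z^2)/2))) u := by
      intro u
      by_cases hu : a < u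
      · rw [Set.indicator_of_mem (Set.mem_Ioi.mpr hu)]
        have hfun : (fun z => G (u, z))
            = (Ioi ((a - ρ*u)/s)).indicator (fun z => Real.exp (-((u^2+z^2)/2))) := by
          ext z
          by_cases hz : (a - ρ*u)/s < z
          · rw [Set.indicator_of_mem (Set.mem_Ioi.mpr hz), hG_def,
              Set.indicator_of_mem (show (u,z) ∈ S from ⟨hu, hz⟩)]
          · rw [Set.indicator_of_notMem (fun hc => hz (Set.mem_Ioi.mp hc)), hG_def,
              Set.indicator_of_notMem (fun hc => hz hc.2)]
        rw [hfun, integral_indicator measurableSet_Ioi]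
      · rw [Set.indicator_of_notMem (fun hc => hu (Set.mem_Ioi.mp hc))]
        have hfun : (fun z => G (u, z)) = fun _ => (0:ℝ) := by
          ext z; rw [hG_def, Set.indicator_of_notMem (fun hc => hu hc.1)]
        rw [hfun, integral_zero]
    simp_rw [hfib]
    rw [integral_indicator measurableSet_Ioi]
  -- membership criterion in polar form
  have hmem : ∀ r θ : ℝ, ((r * Real.cos θ, r * Real.sin θ) ∈ S
      ↔ (a < r * Real.cos θ ∧ a < r * Real.cos (θ - γ))) := by
    intro r θ
    rw [hS_def]
    simp only [Set.mem_setOf_eq]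
    constructor
    · rintro ⟨h1, h2⟩
      refine ⟨h1, ?_⟩
      rw [div_lt_iff₀ hs] at h2
      rw [Real.cos_sub, hcos, hsin]; nlinarith
    · rintro ⟨h1, h2⟩
      refine ⟨h1, ?_⟩
      rw [div_lt_iff₀ hs]
      rw [Real.cos_sub, hcos, hsin] at h2; nlinarith
  have hr2 : ∀ r θ : ℝ, (r * Real.cos θ)^2 + (r * Real.sin θ)^2 = r^2 := by
    intro r θ; have := Real.sin_sq_add_cos_sq θ; nlinarith
  -- Step 2 : polar coordinates
  have step2 : (∫ p, G p) = ∫ θ in Ioo (-π) π, ∫ r in Ioi (0:ℝ),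
      r * G (r * Real.cos θ, r * Real.sin θ) := by
    rw [← integral_comp_polarCoord_symm G]
    have hFint : Integrable (fun q : ℝ × ℝ => q.1 * G (q.1 * Real.cos q.2, q.1 * Real.sin q.2))
        ((volume.restrict (Ioi (0:ℝ))).prod (volume.restrict (Ioo (-π) π))) := by
      have hFm : Measurable fun q : ℝ × ℝ => q.1 * G (q.1 * Real.cos q.2, q.1 * Real.sin q.2) :=
        measurable_fst.mul (hGmeas.comp
          ((measurable_fst.mul (Real.measurable_cos.comp measurable_snd)).prodMk
            (measurable_fst.mul (Real.measurable_sin.comp measurable_snd))))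
      have hb1 : Integrable (fun r : ℝ => r * Real.exp (-(r^2/2)))
          (volume.restrict (Ioi (0:ℝ))) := by
        have h3 := integrable_mul_exp_neg_mul_sq (b := (1/2 : ℝ)) (by norm_num)
        have h2 : (fun r : ℝ => r * Real.exp (-(r^2/2)))
            = fun r => r * Real.exp (-(1/2) * r^2) := by
          ext r; ring_nf
        rw [h2]; exact h3.integrableOn
      have hb2 : Integrable (fun _ : ℝ => (1:ℝ)) (volume.restrict (Ioo (-π) π)) :=
        integrableOn_const measure_Ioo_lt_top.ne
      apply Integrable.mono' (hb1.mul_prod hb2)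
      · exact hFm.aestronglyMeasurable
      · rw [Measure.prod_restrict]
        refine (ae_restrict_iff' (measurableSet_Ioi.prod measurableSet_Ioo)).mpr ?_
        apply Filter.Eventually.of_forall
        rintro ⟨r, θ⟩ ⟨hr, -⟩
        simp only [norm_mul, Real.norm_eq_abs, mul_one]
        have hr0 : (0:ℝ) ≤ r := le_of_lt hr
        rw [abs_of_nonneg hr0]
        apply mul_le_mul_of_nonneg_left ?_ hr0
        have hb : ‖G (r * Real.cos θ, r * Real.sin θ)‖
            ≤ ‖f2 (r * Real.cos θ, r * Real.sin θ)‖ :=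
          norm_indicator_le_norm_self f2 (r * Real.cos θ, r * Real.sin θ)
        rw [Real.norm_eq_abs, Real.norm_eq_abs] at hb
        refine le_trans hb (le_of_eq ?_)
        rw [hf2_def]
        simp only
        rw [hr2 r θ, abs_of_pos (Real.exp_pos _)]
    calc ∫ p in polarCoord.target, p.1 • G (polarCoord.symm p)
        = ∫ q in Ioi (0:ℝ) ×ˢ Ioo (-π) π, q.1 * G (q.1 * Real.cos q.2, q.1 * Real.sin q.2) := by
          rw [show polarCoord.target = Ioi (0:ℝ) ×ˢ Ioo (-π) π from rfl]
          apply setIntegral_congr_fun (measurableSet_Ioi.prod measurableSet_Ioo)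
          intro q _
          simp [polarCoord, smul_eq_mul]
      _ = ∫ θ in Ioo (-π) π, ∫ r in Ioi (0:ℝ), r * G (r * Real.cos θ, r * Real.sin θ) := by
          rw [Measure.volume_eq_prod, ← Measure.prod_restrict]
          exact integral_prod_symm _ hFint
  -- Step 3 : the inner radial integral
  set m : ℝ → ℝ := fun θ => max (a / Real.cos θ) (a / Real.cos (θ - γ)) with hm_def
  have step3 : ∀ θ ∈ Ioo (-π) π, (∫ r in Ioi (0:ℝ), r * G (r * Real.cos θ, r * Real.sin θ))
      = (Ioo (γ - π/2) (π/2)).indicator (fun θ => Real.exp (-((m θ)^2/2))) θ := by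
    intro θ hθ
    by_cases hW : θ ∈ Ioo (γ - π/2) (π/2)
    · rw [Set.indicator_of_mem hW]
      have hc1 : 0 < Real.cos θ :=
        Real.cos_pos_of_mem_Ioo (Set.mem_Ioo.mpr ⟨by linarith [hW.1], hW.2⟩)
      have hc2 : 0 < Real.cos (θ - γ) :=
        Real.cos_pos_of_mem_Ioo (Set.mem_Ioo.mpr ⟨by linarith [hW.1], by linarith [hW.2]⟩)
      have hm0 : 0 ≤ m θ := le_trans (div_nonneg ha hc1.le) (le_max_left _ _)
      have heq : EqOn (fun r => r * G (r * Real.cos θ, r * Real.sin θ))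
          ((Ioi (m θ)).indicator (fun r => r * Real.exp (-(r^2/2)))) (Ioi (0:ℝ)) := by
        intro r hr
        by_cases hrm : m θ < r
        · rw [Set.indicator_of_mem (Set.mem_Ioi.mpr hrm)]
          show r * G (r * Real.cos θ, r * Real.sin θ) = r * Real.exp (-(r^2/2))
          have hmem2 : (r * Real.cos θ, r * Real.sin θ) ∈ S := by
            apply (hmem r θ).mpr
            have h1 := (max_lt_iff.mp hrm).1
            have h2 := (max_lt_iff.mp hrm).2
            exact ⟨(div_lt_iff₀ hc1).mp h1, (div_lt_iff₀ hc2).mp h2⟩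
          rw [hG_def, Set.indicator_of_mem hmem2, hf2_def]
          simp only
          rw [hr2 r θ]
        · rw [Set.indicator_of_notMem (by simpa using hrm)]
          show r * G (r * Real.cos θ, r * Real.sin θ) = 0
          have hnmem : (r * Real.cos θ, r * Real.sin θ) ∉ S := by
            intro hcmem
            rcases (hmem r θ).mp hcmem with ⟨h1, h2⟩
            exact hrm (max_lt_iff.mpr ⟨(div_lt_iff₀ hc1).mpr h1, (div_lt_iff₀ hc2).mpr h2⟩)
          rw [hG_def, Set.indicator_of_notMem hnmem, mul_zero]
      rw [setIntegral_congr_fun measurableSet_Ioi heq,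
        setIntegral_indicator measurableSet_Ioi, Ioi_inter_Ioi,
        max_eq_right hm0, rint]
    · rw [Set.indicator_of_notMem hW]
      have hkey : EqOn (fun r => r * G (r * Real.cos θ, r * Real.sin θ))
          (fun _ => (0:ℝ)) (Ioi (0:ℝ)) := by
        intro r hr
        have hr0 : (0:ℝ) < r := hr
        show r * G (r * Real.cos θ, r * Real.sin θ) = 0
        have hnot : (r * Real.cos θ, r * Real.sin θ) ∉ S := by
          rw [hmem r θ]
          rintro ⟨h1, h2⟩
          rw [Set.mem_Ioo, not_and_or] at hW
          push_neg at hW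
          rcases hW with hW1 | hW2
          · -- θ ≤ γ - π/2
            by_cases hsub : γ - 3*π/2 ≤ θ
            · have hcnp : Real.cos (θ - γ) ≤ 0 := by
                rw [show θ - γ = -(γ - θ) by ring, Real.cos_neg]
                exact Real.cos_nonpos_of_pi_div_two_le_of_le (by linarith) (by linarith)
              nlinarith
            · push_neg at hsub
              have hθπ : -π < θ := hθ.1
              have hcnp : Real.cos θ ≤ 0 := by
                rw [show θ = -(-θ) by ring, Real.cos_neg]
                exact Real.cos_nonpos_of_pi_div_two_le_of_le (by linarith) (by linarith)
              nlinarith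
          · -- π/2 ≤ θ
            have hcnp : Real.cos θ ≤ 0 :=
              Real.cos_nonpos_of_pi_div_two_le_of_le hW2 (by linarith [hθ.2, Real.pi_pos])
            nlinarith
        rw [hG_def, Set.indicator_of_notMem hnot, mul_zero]
      rw [setIntegral_congr_fun measurableSet_Ioi hkey, integral_zero]
  -- Step 4 : the angular integral
  have hm_meas : Measurable m := by
    apply Measurable.max
    · exact measurable_const.div Real.measurable_cos
    · exact measurable_const.div (Real.measurable_cos.comp (measurable_id.sub measurable_const))
  have hgmeas : Measurable fun θ : ℝ => Real.exp (-((m θ)^2/2)) :=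
    (((hm_meas.pow_const 2).div_const 2).neg).exp
  have hgint : ∀ x y : ℝ, IntervalIntegrable (fun θ => Real.exp (-((m θ)^2/2))) volume x y := by
    intro x y
    rw [intervalIntegrable_iff]
    apply Integrable.mono' (g := fun _ => (1:ℝ))
      (integrableOn_const measure_Ioc_lt_top.ne)
      hgmeas.aestronglyMeasurable
    refine Filter.Eventually.of_forall (fun θ => ?_)
    rw [Real.norm_eq_abs, abs_of_pos (Real.exp_pos _)]
    exact Real.exp_le_one_iff.mpr (neg_nonpos.mpr (div_nonneg (sq_nonneg _) (by norm_num)))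
  have hform : ∀ t : ℝ, ((a/t)^2/2) = a^2/(2*t^2) := by
    intro t; rw [div_pow, div_div]; ring_nf
  have hcomp : ∀ x ∈ Ioo (γ/2) (π/2),
      Real.cos x ≤ Real.cos (x - γ) ∧ 0 < Real.cos x ∧ 0 < Real.cos (x - γ) := by
    intro x hx
    have h1 : 0 < Real.cos x := Real.cos_pos_of_mem_Ioo (Set.mem_Ioo.mpr ⟨by linarith [hx.1, hγ0], hx.2⟩)
    have h2 : 0 < Real.cos (x - γ) :=
      Real.cos_pos_of_mem_Ioo (Set.mem_Ioo.mpr ⟨by linarith [hx.1, hγπ], by linarith [hx.2, hγ0]⟩)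
    have h3 : Real.cos x ≤ Real.cos (x - γ) := by
      rw [← Real.cos_abs (x - γ)]
      apply Real.cos_le_cos_of_nonneg_of_le_pi (abs_nonneg _)
        (by linarith [hx.2, Real.pi_pos])
      rw [abs_le]
      exact ⟨by linarith [hx.1], by linarith [hγ0]⟩
    exact ⟨h3, h1, h2⟩
  have hendpt : π/2 - γ/2 = π/4 + Real.arcsin ρ/2 := by
    rw [hγ_def, Real.arccos_eq_pi_div_two_sub_arcsin]; ring
  have step4 : (∫ θ in Ioo (-π) π,
        (Ioo (γ - π/2) (π/2)).indicator (fun θ => Real.exp (-((m θ)^2/2))) θ)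
      = 2 * ∫ θ in (0:ℝ)..(π/4 + Real.arcsin ρ/2), Real.exp (-(a^2/(2 * Real.sin θ^2))) := by
    rw [setIntegral_indicator measurableSet_Ioo, Ioo_inter_Ioo,
      max_eq_right (by linarith [hγ0, Real.pi_pos]), min_eq_right (by linarith [Real.pi_pos])]
    have hT : (∫ θ in Ioo (γ - π/2) (π/2), Real.exp (-((m θ)^2/2)))
        = ∫ θ in (γ - π/2)..(π/2), Real.exp (-((m θ)^2/2)) := by
      rw [intervalIntegral.integral_of_le (by linarith [hγπ]), integral_Ioc_eq_integral_Ioo]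
    rw [hT, ← intervalIntegral.integral_add_adjacent_intervals (b := γ/2)
      (hgint _ _) (hgint _ _)]
    have piece2 : (∫ x in (γ/2)..(π/2), Real.exp (-((m x)^2/2)))
        = ∫ x in (γ/2)..(π/2), Real.exp (-(a^2/(2 * Real.cos x^2))) := by
      rw [intervalIntegral.integral_of_le (by linarith [hγπ]),
        intervalIntegral.integral_of_le (by linarith [hγπ]),
        integral_Ioc_eq_integral_Ioo, integral_Ioc_eq_integral_Ioo]
      apply setIntegral_congr_fun measurableSet_Ioo
      intro x hx
      obtain ⟨h3, h1, h2⟩ := hcomp x hx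
      show Real.exp (-((m x)^2/2)) = Real.exp (-(a^2/(2 * Real.cos x^2)))
      have hmx : m x = a / Real.cos x := by
        rw [hm_def]
        apply max_eq_left
        rw [div_le_div_iff₀ h2 h1]
        nlinarith
      rw [hmx, hform]
    have piece1 : (∫ x in (γ - π/2)..(γ/2), Real.exp (-((m x)^2/2)))
        = ∫ x in (γ/2)..(π/2), Real.exp (-(a^2/(2 * Real.cos x^2))) := by
      have hsub1 := intervalIntegral.integral_comp_sub_left
        (fun θ => Real.exp (-((m θ)^2/2))) γ (a := γ/2) (b := π/2)
      rw [show γ - γ/2 = γ/2 by ring] at hsub1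
      rw [← hsub1]
      rw [intervalIntegral.integral_of_le (by linarith [hγπ]),
        intervalIntegral.integral_of_le (by linarith [hγπ]),
        integral_Ioc_eq_integral_Ioo, integral_Ioc_eq_integral_Ioo]
      apply setIntegral_congr_fun measurableSet_Ioo
      intro x hx
      obtain ⟨h3, h1, h2⟩ := hcomp x hx
      show Real.exp (-((m (γ - x))^2/2)) = Real.exp (-(a^2/(2 * Real.cos x^2)))
      have hmx : m (γ - x) = a / Real.cos x := by
        rw [hm_def]
        simp only
        rw [show γ - x - γ = -x by ring, Real.cos_neg,
          show γ - x = -(x - γ) by ring, Real.cos_neg]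
        apply max_eq_right
        rw [div_le_div_iff₀ h2 h1]
        nlinarith
      rw [hmx, hform]
    rw [piece1, piece2, ← two_mul]
    congr 1
    have hsub := intervalIntegral.integral_comp_sub_left
      (fun x => Real.exp (-(a^2/(2 * Real.cos x^2)))) (π/2) (a := (0:ℝ)) (b := π/2 - γ/2)
    rw [show π/2 - (π/2 - γ/2) = γ/2 by ring, show π/2 - (0:ℝ) = π/2 by ring] at hsub
    rw [← hsub, hendpt]
    apply intervalIntegral.integral_congr
    intro x _
    show Real.exp (-(a^2/(2 * Real.cos (π/2 - x)^2))) = Real.exp (-(a^2/(2 * Real.sin x^2)))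
    rw [Real.cos_pi_div_two_sub]
  rw [step1, step2, ← step4]
  exact setIntegral_congr_fun measurableSet_Ioo (fun θ hθ => step3 θ hθ)

end CraigAux

/-- Joint density of a bivariate Gaussian with common mean `μ`, common variance `σ²`
and correlation `ρ`. -/
noncomputable def biGaussDens (μ σ ρ x y : ℝ) : ℝ :=
  Real.exp (-(((x - μ) ^ 2 + (y - μ) ^ 2 - 2 * ρ * (x - μ) * (y - μ))
      / (2 * σ ^ 2 * (1 - ρ ^ 2))))
    / (2 * Real.pi * σ ^ 2 * Real.sqrt (1 - ρ ^ 2))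

/-- Craig-form representation of the joint exceedance probability of an equicorrelated
bivariate normal at a common threshold above the mean. -/
theorem biGauss_joint_exceedance (μ σ ρ Ith : ℝ) (hσ : 0 < σ) (hρ : -1 < ρ) (hρ' : ρ < 1)
    (hI : μ ≤ Ith) :
    (∫ x in Set.Ioi Ith, ∫ y in Set.Ioi Ith, biGaussDens μ σ ρ x y)
      = (1 / Real.pi) *
        ∫ θ in (0 : ℝ)..(Real.pi / 4 + Real.arcsin ρ / 2),
          Real.exp (-(((Ith - μ) / σ) ^ 2 / (2 * Real.sin θ ^ 2))) := by
  have hs2 : Real.sqrt (1 - ρ^2) ^ 2 = 1 - ρ^2 := Real.sq_sqrt (by nlinarith)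
  set s := Real.sqrt (1 - ρ^2) with hs_def
  have hs : 0 < s := Real.sqrt_pos.mpr (by nlinarith)
  set a := (Ith - μ)/σ with ha_def
  have ha : 0 ≤ a := div_nonneg (by linarith) hσ.le
  have hIa : μ + σ * a = Ith := by rw [ha_def]; field_simp; ring
  -- inner substitution
  have inner_eq : ∀ x : ℝ, (∫ y in Set.Ioi Ith, biGaussDens μ σ ρ x y)
      = (σ*s) * ∫ z in Set.Ioi ((a - ρ*((x-μ)/σ))/s),
          Real.exp (-((((x-μ)/σ)^2+z^2)/2)) / (2*π*σ^2*s) := by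
    intro x
    have hbs : 0 < σ * s := mul_pos hσ hs
    have hA : μ + ρ*(x-μ) + (σ*s) * ((a - ρ*((x-μ)/σ))/s) = Ith := by
      field_simp
      linarith [hIa]
    have h := integral_Ioi_comp_affine (biGaussDens μ σ ρ x) (μ + ρ*(x-μ)) hbs
      ((a - ρ*((x-μ)/σ))/s)
    rw [hA] at h
    calc (∫ y in Set.Ioi Ith, biGaussDens μ σ ρ x y)
        = (σ*s) * ((σ*s)⁻¹ * ∫ y in Set.Ioi Ith, biGaussDens μ σ ρ x y) := by
          field_simp
      _ = (σ*s) * ∫ z in Set.Ioi ((a - ρ*((x-μ)/σ))/s),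
            biGaussDens μ σ ρ x (μ + ρ*(x-μ) + (σ*s) * z) := by rw [← h]
      _ = (σ*s) * ∫ z in Set.Ioi ((a - ρ*((x-μ)/σ))/s),
            Real.exp (-((((x-μ)/σ)^2+z^2)/2)) / (2*π*σ^2*s) := by
          congr 1
          apply setIntegral_congr_fun measurableSet_Ioi
          intro z _
          show biGaussDens μ σ ρ x (μ + ρ*(x-μ) + (σ*s) * z)
              = Real.exp (-((((x-μ)/σ)^2+z^2)/2)) / (2*π*σ^2*s)
          unfold biGaussDens
          rw [← hs_def]
          have hσ2 : (x-μ)^2/σ^2 * σ^2 = (x-μ)^2 := by field_simp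
          have hnum : (x - μ)^2 + ((μ + ρ*(x-μ) + (σ*s)*z) - μ)^2
              - 2*ρ*(x-μ)*((μ + ρ*(x-μ) + (σ*s)*z) - μ)
              = s^2 * ((x-μ)^2/σ^2 + z^2) * σ^2 := by
            rw [show s^2*((x-μ)^2/σ^2 + z^2)*σ^2
              = s^2*((x-μ)^2/σ^2*σ^2) + s^2*σ^2*z^2 from by ring, hσ2]
            linear_combination (-(x-μ)^2) * hs2
          rw [hnum, ← hs2]
          have hexp : -(s^2 * ((x-μ)^2/σ^2 + z^2) * σ^2 / (2 * σ^2 * s^2))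
              = -((((x-μ)/σ)^2 + z^2)/2) := by
            rw [div_pow]
            field_simp
          rw [hexp]
  rw [setIntegral_congr_fun measurableSet_Ioi (fun x _ => inner_eq x),
    integral_const_mul]
  -- outer substitution
  set J : ℝ → ℝ := fun u => ∫ z in Set.Ioi ((a - ρ*u)/s),
      Real.exp (-((u^2+z^2)/2)) / (2*π*σ^2*s) with hJ_def
  have houter : (∫ x in Set.Ioi Ith, J ((x-μ)/σ)) = σ * ∫ u in Set.Ioi a, J u := by
    have h := integral_Ioi_comp_affine (fun x => J ((x-μ)/σ)) μ hσ a
    rw [hIa] at h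
    calc (∫ x in Set.Ioi Ith, J ((x-μ)/σ))
        = σ * (σ⁻¹ * ∫ x in Set.Ioi Ith, J ((x-μ)/σ)) := by field_simp
      _ = σ * ∫ u in Set.Ioi a, J ((μ + σ*u - μ)/σ) := by rw [← h]
      _ = σ * ∫ u in Set.Ioi a, J u := by
          congr 1
          apply setIntegral_congr_fun measurableSet_Ioi
          intro u _
          show J ((μ + σ*u - μ)/σ) = J u
          congr 1
          field_simp
          ring
  rw [houter]
  have hJdiv : ∀ u : ℝ, J u = (∫ z in Set.Ioi ((a - ρ*u)/s),
      Real.exp (-((u^2+z^2)/2))) / (2*π*σ^2*s) := by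
    intro u
    rw [hJ_def]
    exact integral_div _ _
  rw [setIntegral_congr_fun measurableSet_Ioi (fun u _ => hJdiv u), integral_div,
    gauss_core a ρ ha hρ hρ']
  have hπ : Real.pi ≠ 0 := Real.pi_ne_zero
  field_simp
end
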